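/- Let K ⊆ ℝ be an open interval, let A : (0,∞) × K → ℝ be C², and let c₁, c₂, c₃ : K → ℝ be differentiable. Suppose G(p,y,t) = A(p,t) + p·(c₁(t)y² + c₂(t)y + c₃(t)) satisfies the G-equation G_{yp}² − G_{yy} G_{pp} − G_{pt} = 0 for all p ∈ (0,∞), y ∈ ℝ, t ∈ K. Then c₁'(t) = 4·c₁(t)² for all t ∈ K. -/

import Mathlib

/-- Partial derivative of `f : ℝ³ → ℝ` in direction `v`, as a function. -/
noncomputable def pd (v : ℝ × ℝ × ℝ) (f : ℝ × ℝ × ℝ → ℝ) : ℝ × ℝ × ℝ → ℝ :=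
  fun q => fderiv ℝ f q v

/-- ∂/∂p for functions `G(p,y,t)`. -/
noncomputable def px : (ℝ × ℝ × ℝ → ℝ) → ℝ × ℝ × ℝ → ℝ := pd (1, 0, 0)
/-- ∂/∂y. -/
noncomputable def py : (ℝ × ℝ × ℝ → ℝ) → ℝ × ℝ × ℝ → ℝ := pd (0, 1, 0)
/-- ∂/∂t. -/
noncomputable def pt : (ℝ × ℝ × ℝ → ℝ) → ℝ × ℝ × ℝ → ℝ := pd (0, 0, 1)


open ContinuousLinearMap in
noncomputable def pip : ℝ × ℝ × ℝ →L[ℝ] ℝ := fst ℝ ℝ (ℝ × ℝ)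
open ContinuousLinearMap in
noncomputable def piy : ℝ × ℝ × ℝ →L[ℝ] ℝ := (fst ℝ ℝ ℝ).comp (snd ℝ ℝ (ℝ × ℝ))
open ContinuousLinearMap in
noncomputable def pit : ℝ × ℝ × ℝ →L[ℝ] ℝ := (snd ℝ ℝ ℝ).comp (snd ℝ ℝ (ℝ × ℝ))
open ContinuousLinearMap in
noncomputable def pi13 : ℝ × ℝ × ℝ →L[ℝ] ℝ × ℝ := (fst ℝ ℝ (ℝ × ℝ)).prod pit

lemma aux1 (F : ℝ × ℝ → ℝ) (c₁ c₂ c₃ : ℝ → ℝ) (p y t : ℝ)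
    (hF : DifferentiableAt ℝ F (p, t))
    (h1 : DifferentiableAt ℝ c₁ t) (h2 : DifferentiableAt ℝ c₂ t)
    (h3 : DifferentiableAt ℝ c₃ t) :
    ∃ L : ℝ × ℝ × ℝ →L[ℝ] ℝ,
      HasFDerivAt (fun r : ℝ × ℝ × ℝ =>
        F (r.1, r.2.2) + r.1 * (c₁ r.2.2 * r.2.1 ^ 2 + c₂ r.2.2 * r.2.1 + c₃ r.2.2)) L (p, y, t) ∧
      L (0, 1, 0) = p * (2 * c₁ t * y + c₂ t) ∧
      L (1, 0, 0) = fderiv ℝ F (p, t) (1, 0) + (c₁ t * y ^ 2 + c₂ t * y + c₃ t) ∧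
      L (0, 0, 1) = fderiv ℝ F (p, t) (0, 1)
        + p * (deriv c₁ t * y ^ 2 + deriv c₂ t * y + deriv c₃ t) := by
  have hFc : HasFDerivAt (fun r : ℝ × ℝ × ℝ => F (r.1, r.2.2))
      ((fderiv ℝ F (p, t)).comp pi13) (p, y, t) :=
    (hF.hasFDerivAt).comp (p, y, t) pi13.hasFDerivAt
  have h1' : HasFDerivAt (fun r : ℝ × ℝ × ℝ => c₁ r.2.2) (deriv c₁ t • pit) (p, y, t) :=
    (h1.hasDerivAt).comp_hasFDerivAt _ pit.hasFDerivAt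
  have h2' : HasFDerivAt (fun r : ℝ × ℝ × ℝ => c₂ r.2.2) (deriv c₂ t • pit) (p, y, t) :=
    (h2.hasDerivAt).comp_hasFDerivAt _ pit.hasFDerivAt
  have h3' : HasFDerivAt (fun r : ℝ × ℝ × ℝ => c₃ r.2.2) (deriv c₃ t • pit) (p, y, t) :=
    (h3.hasDerivAt).comp_hasFDerivAt _ pit.hasFDerivAt
  have hy2 : HasFDerivAt (fun r : ℝ × ℝ × ℝ => r.2.1 ^ 2) (((2 : ℕ) * y ^ 1) • piy) (p, y, t) :=
    by have := (hasDerivAt_pow 2 y).comp_hasFDerivAt (p, y, t) piy.hasFDerivAt; exact this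
  have hy1 : HasFDerivAt (fun r : ℝ × ℝ × ℝ => r.2.1) piy (p, y, t) := piy.hasFDerivAt
  have hp : HasFDerivAt (fun r : ℝ × ℝ × ℝ => r.1) pip (p, y, t) := pip.hasFDerivAt
  have hB := ((h1'.mul hy2).add (h2'.mul hy1)).add h3'
  have hAll := hFc.add (hp.mul hB)
  refine ⟨_, hAll, ?_, ?_, ?_⟩ <;>
    simp [pip, piy, pit, pi13, ContinuousLinearMap.smul_apply, Prod.mk_zero_zero] <;> ring

lemma aux2 (F : ℝ × ℝ → ℝ) (c₁ c₂ c₃ : ℝ → ℝ) (p y t : ℝ)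
    (hF : DifferentiableAt ℝ F (p, t))
    (h1 : DifferentiableAt ℝ c₁ t) (h2 : DifferentiableAt ℝ c₂ t)
    (h3 : DifferentiableAt ℝ c₃ t) :
    ∃ L : ℝ × ℝ × ℝ →L[ℝ] ℝ,
      HasFDerivAt (fun r : ℝ × ℝ × ℝ =>
        F (r.1, r.2.2) + (c₁ r.2.2 * r.2.1 ^ 2 + c₂ r.2.2 * r.2.1 + c₃ r.2.2)) L (p, y, t) ∧
      L (1, 0, 0) = fderiv ℝ F (p, t) (1, 0) ∧
      L (0, 0, 1) = fderiv ℝ F (p, t) (0, 1)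
        + (deriv c₁ t * y ^ 2 + deriv c₂ t * y + deriv c₃ t) := by
  have hFc : HasFDerivAt (fun r : ℝ × ℝ × ℝ => F (r.1, r.2.2))
      ((fderiv ℝ F (p, t)).comp pi13) (p, y, t) :=
    (hF.hasFDerivAt).comp (p, y, t) pi13.hasFDerivAt
  have h1' : HasFDerivAt (fun r : ℝ × ℝ × ℝ => c₁ r.2.2) (deriv c₁ t • pit) (p, y, t) :=
    (h1.hasDerivAt).comp_hasFDerivAt _ pit.hasFDerivAt
  have h2' : HasFDerivAt (fun r : ℝ × ℝ × ℝ => c₂ r.2.2) (deriv c₂ t • pit) (p, y, t) :=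
    (h2.hasDerivAt).comp_hasFDerivAt _ pit.hasFDerivAt
  have h3' : HasFDerivAt (fun r : ℝ × ℝ × ℝ => c₃ r.2.2) (deriv c₃ t • pit) (p, y, t) :=
    (h3.hasDerivAt).comp_hasFDerivAt _ pit.hasFDerivAt
  have hy2 : HasFDerivAt (fun r : ℝ × ℝ × ℝ => r.2.1 ^ 2) (((2 : ℕ) * y ^ 1) • piy) (p, y, t) :=
    by have := (hasDerivAt_pow 2 y).comp_hasFDerivAt (p, y, t) piy.hasFDerivAt; exact this
  have hy1 : HasFDerivAt (fun r : ℝ × ℝ × ℝ => r.2.1) piy (p, y, t) := piy.hasFDerivAt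
  have hAll := hFc.add (((h1'.mul hy2).add (h2'.mul hy1)).add h3')
  refine ⟨_, hAll, ?_, ?_⟩ <;>
    simp [pip, piy, pit, pi13, ContinuousLinearMap.smul_apply] <;> ring

/-- The `B_{yyy} = 0` branch: if `A(p,t)` is C² on `(0,∞) × K` (`K` an open interval),
`c₁, c₂, c₃` are differentiable on `K`, and
`G(p,y,t) = A(p,t) + p(c₁(t)y² + c₂(t)y + c₃(t))` satisfies the G-equation
`G_{yp}² - G_{yy} G_{pp} - G_{pt} = 0` for all `p > 0`, `y ∈ ℝ`, `t ∈ K`, then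
`c₁' = 4 c₁²` on `K`. -/
theorem stmt13 (K : Set ℝ) (hKo : IsOpen K) (hKc : K.OrdConnected)
    (A : ℝ × ℝ → ℝ) (hA : ContDiffOn ℝ 2 A (Set.Ioi (0 : ℝ) ×ˢ K))
    (c₁ c₂ c₃ : ℝ → ℝ)
    (hc₁ : DifferentiableOn ℝ c₁ K) (hc₂ : DifferentiableOn ℝ c₂ K)
    (hc₃ : DifferentiableOn ℝ c₃ K)
    (hG : ∀ p > (0 : ℝ), ∀ y : ℝ, ∀ t ∈ K,
      let G : ℝ × ℝ × ℝ → ℝ := fun r =>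
        A (r.1, r.2.2) + r.1 * (c₁ r.2.2 * r.2.1 ^ 2 + c₂ r.2.2 * r.2.1 + c₃ r.2.2)
      (px (py G) (p, y, t)) ^ 2 - py (py G) (p, y, t) * px (px G) (p, y, t)
        - pt (px G) (p, y, t) = 0) :
    ∀ t ∈ K, deriv c₁ t = 4 * (c₁ t) ^ 2 := by
  set G : ℝ × ℝ × ℝ → ℝ := fun r =>
    A (r.1, r.2.2) + r.1 * (c₁ r.2.2 * r.2.1 ^ 2 + c₂ r.2.2 * r.2.1 + c₃ r.2.2) with hGdef
  set Ap : ℝ × ℝ → ℝ := fun z => fderiv ℝ A z (1, 0) with hApdef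
  have hU2 : IsOpen (Set.Ioi (0 : ℝ) ×ˢ K) := isOpen_Ioi.prod hKo
  have hUo : IsOpen ((Set.Ioi (0 : ℝ)) ×ˢ ((Set.univ : Set ℝ) ×ˢ K)) :=
    isOpen_Ioi.prod (isOpen_univ.prod hKo)
  -- differentiability facts
  have hAat : ∀ p, 0 < p → ∀ t ∈ K, DifferentiableAt ℝ A (p, t) := fun p hp t ht =>
    (hA.contDiffAt (hU2.mem_nhds (Set.mk_mem_prod hp ht))).differentiableAt (by norm_num)
  have hApat : ∀ p, 0 < p → ∀ t ∈ K, DifferentiableAt ℝ Ap (p, t) := by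
    intro p hp t ht
    have h2 : ContDiffAt ℝ 2 A (p, t) := hA.contDiffAt (hU2.mem_nhds (Set.mk_mem_prod hp ht))
    have hd : DifferentiableAt ℝ (fderiv ℝ A) (p, t) :=
      (h2.fderiv_right (m := 1) le_rfl).differentiableAt one_ne_zero
    exact hd.clm_apply (differentiableAt_const _)
  have hc₁at : ∀ t ∈ K, DifferentiableAt ℝ c₁ t := fun t ht =>
    hc₁.differentiableAt (hKo.mem_nhds ht)
  have hc₂at : ∀ t ∈ K, DifferentiableAt ℝ c₂ t := fun t ht =>
    hc₂.differentiableAt (hKo.mem_nhds ht)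
  have hc₃at : ∀ t ∈ K, DifferentiableAt ℝ c₃ t := fun t ht =>
    hc₃.differentiableAt (hKo.mem_nhds ht)
  -- first derivatives
  have hfirst : ∀ p, 0 < p → ∀ y : ℝ, ∀ t ∈ K,
      py G (p, y, t) = p * (2 * c₁ t * y + c₂ t) ∧
      px G (p, y, t) = Ap (p, t) + (c₁ t * y ^ 2 + c₂ t * y + c₃ t) := by
    intro p hp y t ht
    obtain ⟨L, hL, e1, e2, _⟩ :=
      aux1 A c₁ c₂ c₃ p y t (hAat p hp t ht) (hc₁at t ht) (hc₂at t ht) (hc₃at t ht)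
    constructor
    · show fderiv ℝ G (p, y, t) (0, 1, 0) = _
      rw [hL.fderiv]; exact e1
    · show fderiv ℝ G (p, y, t) (1, 0, 0) = _
      rw [hL.fderiv]; exact e2
  -- second derivatives
  have hsecond : ∀ p, 0 < p → ∀ y : ℝ, ∀ t ∈ K,
      px (py G) (p, y, t) = 2 * c₁ t * y + c₂ t ∧
      py (py G) (p, y, t) = p * (2 * c₁ t) ∧
      px (px G) (p, y, t) = fderiv ℝ Ap (p, t) (1, 0) ∧
      pt (px G) (p, y, t) = fderiv ℝ Ap (p, t) (0, 1)
        + (deriv c₁ t * y ^ 2 + deriv c₂ t * y + deriv c₃ t) := by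
    intro p hp y t ht
    have hmem : (p, y, t) ∈ (Set.Ioi (0 : ℝ)) ×ˢ ((Set.univ : Set ℝ) ×ˢ K) :=
      ⟨hp, Set.mem_univ _, ht⟩
    -- py G agrees with an explicit function near (p,y,t)
    have heq1 : py G =ᶠ[nhds (p, y, t)] fun q : ℝ × ℝ × ℝ =>
        (fun _ : ℝ × ℝ => (0 : ℝ)) (q.1, q.2.2)
          + q.1 * ((fun _ => (0:ℝ)) q.2.2 * q.2.1 ^ 2 + (fun s => 2 * c₁ s) q.2.2 * q.2.1
              + c₂ q.2.2) := by
      refine Filter.eventuallyEq_of_mem (hUo.mem_nhds hmem) ?_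
      rintro ⟨a, b, c⟩ ⟨ha, -, hc⟩
      have := (hfirst a ha b c hc).1
      simp only at this ⊢
      rw [this]; ring
    have heq2 : px G =ᶠ[nhds (p, y, t)] fun q : ℝ × ℝ × ℝ =>
        Ap (q.1, q.2.2) + (c₁ q.2.2 * q.2.1 ^ 2 + c₂ q.2.2 * q.2.1 + c₃ q.2.2) := by
      refine Filter.eventuallyEq_of_mem (hUo.mem_nhds hmem) ?_
      rintro ⟨a, b, c⟩ ⟨ha, -, hc⟩
      exact (hfirst a ha b c hc).2
    obtain ⟨L1, hL1, f1, f2, _⟩ := aux1 (fun _ : ℝ × ℝ => (0 : ℝ)) (fun _ => 0)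
      (fun s => 2 * c₁ s) c₂ p y t (differentiableAt_const _) (differentiableAt_const _)
      ((hc₁at t ht).const_mul 2) (hc₂at t ht)
    obtain ⟨L2, hL2, g1, g2⟩ := aux2 Ap c₁ c₂ c₃ p y t (hApat p hp t ht)
      (hc₁at t ht) (hc₂at t ht) (hc₃at t ht)
    have hd1 : fderiv ℝ (py G) (p, y, t) = L1 := by
      rw [heq1.fderiv_eq]; exact hL1.fderiv
    have hd2 : fderiv ℝ (px G) (p, y, t) = L2 := by
      rw [heq2.fderiv_eq]; exact hL2.fderiv
    refine ⟨?_, ?_, ?_, ?_⟩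
    · show fderiv ℝ (py G) (p, y, t) (1, 0, 0) = _
      rw [hd1, f2]; try simp; try ring
    · show fderiv ℝ (py G) (p, y, t) (0, 1, 0) = _
      rw [hd1, f1]; try ring
    · show fderiv ℝ (px G) (p, y, t) (1, 0, 0) = _
      rw [hd2, g1]
    · show fderiv ℝ (px G) (p, y, t) (0, 0, 1) = _
      rw [hd2, g2]
  -- conclude
  intro t ht
  have key : ∀ y : ℝ, (2 * c₁ t * y + c₂ t) ^ 2
      - (1 * (2 * c₁ t)) * fderiv ℝ Ap (1, t) (1, 0)
      - (fderiv ℝ Ap (1, t) (0, 1)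
        + (deriv c₁ t * y ^ 2 + deriv c₂ t * y + deriv c₃ t)) = 0 := by
    intro y
    have e := hG 1 one_pos y t ht
    simp only at e
    obtain ⟨k1, k2, k3, k4⟩ := hsecond 1 one_pos y t ht
    rw [k1, k2, k3, k4] at e
    exact e
  have e0 := key 0
  have e1 := key 1
  have em1 := key (-1)
  linear_combination (-(1:ℝ)/2) * (e1 + em1 - 2 * e0)
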